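/- The braid group Bₙ on n strands is torsion-free: if B ∈ Bₙ satisfies B^k = 1 for some integer k ≥ 1, then B = 1. -/

import Mathlib

namespace Braid

/-- letters at distance ≥ 2 (commuting generators) -/
def Dist2 (i j : ℕ) : Prop := i + 2 ≤ j ∨ j + 2 ≤ i

/-- adjacent letters -/
def Adj (i j : ℕ) : Prop := j = i + 1 ∨ i = j + 1

lemma Dist2.symm {i j : ℕ} (h : Dist2 i j) : Dist2 j i := h.elim .inr .inl
lemma Adj.symm {i j : ℕ} (h : Adj i j) : Adj j i := h.elim .inr .inl
lemma Dist2.ne {i j : ℕ} (h : Dist2 i j) : i ≠ j := by rcases h with h | h <;> omega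
lemma Adj.ne {i j : ℕ} (h : Adj i j) : i ≠ j := by rcases h with h | h <;> omega
lemma adj_or_dist2 {i j : ℕ} (h : i ≠ j) : Adj i j ∨ Dist2 i j := by
  unfold Adj Dist2; omega
lemma not_adj_and_dist2 {i j : ℕ} : ¬ (Adj i j ∧ Dist2 i j) := by unfold Adj Dist2; omega

/-- One braid rewriting step. -/
inductive Step : List ℕ → List ℕ → Prop
  | comm (u v : List ℕ) {i j : ℕ} (h : Dist2 i j) :
      Step (u ++ i :: j :: v) (u ++ j :: i :: v)
  | braid (u v : List ℕ) {i j : ℕ} (h : Adj i j) :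
      Step (u ++ i :: j :: i :: v) (u ++ j :: i :: j :: v)

lemma Step.symm {w w' : List ℕ} (h : Step w w') : Step w' w := by
  cases h with
  | comm u v h => exact .comm u v h.symm
  | braid u v h => exact .braid u v h.symm

/-- Braid equivalence of positive words. -/
def beq : List ℕ → List ℕ → Prop := Relation.ReflTransGen Step

infix:50 " ≋ " => beq

@[refl] lemma beq.refl (w : List ℕ) : w ≋ w := Relation.ReflTransGen.refl

lemma beq.rfl {w : List ℕ} : w ≋ w := Relation.ReflTransGen.refl

lemma beq.symm {w w' : List ℕ} (h : w ≋ w') : w' ≋ w :=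
  by haveI : Std.Symm Step := ⟨fun _ _ hs => hs.symm⟩; exact (Relation.ReflTransGen.stdSymm (r := Step)).symm _ _ h

lemma beq.trans {a b c : List ℕ} (h : a ≋ b) (h' : b ≋ c) : a ≋ c :=
  Relation.ReflTransGen.trans h h'

lemma Step.beq {w w' : List ℕ} (h : Step w w') : w ≋ w' :=
  Relation.ReflTransGen.single h

lemma Step.append_left {w w' : List ℕ} (p : List ℕ) (h : Step w w') :
    Step (p ++ w) (p ++ w') := by
  cases h with
  | comm u v h => rw [← List.append_assoc, ← List.append_assoc]; exact .comm (p ++ u) v h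
  | braid u v h => rw [← List.append_assoc, ← List.append_assoc]; exact .braid (p ++ u) v h

lemma Step.append_right {w w' : List ℕ} (h : Step w w') (q : List ℕ) :
    Step (w ++ q) (w' ++ q) := by
  cases h with
  | comm u v h =>
      have : ∀ (x : List ℕ), (x ++ q) = x ++ q := fun _ => rfl
      simpa [List.append_assoc] using Step.comm (i := _) (j := _) u (v ++ q) h
  | braid u v h => simpa [List.append_assoc] using Step.braid (i := _) (j := _) u (v ++ q) h

lemma beq.append_left {w w' : List ℕ} (p : List ℕ) (h : w ≋ w') : (p ++ w) ≋ (p ++ w') := by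
  induction h with
  | refl => rfl
  | tail _ hs ih => exact ih.trans (hs.append_left p).beq

lemma beq.append_right {w w' : List ℕ} (h : w ≋ w') (q : List ℕ) : (w ++ q) ≋ (w' ++ q) := by
  induction h with
  | refl => rfl
  | tail _ hs ih => exact ih.trans (hs.append_right q).beq

lemma beq.append {a b c d : List ℕ} (h : a ≋ b) (h' : c ≋ d) : (a ++ c) ≋ (b ++ d) :=
  (h.append_right c).trans (h'.append_left b)

lemma beq.cons (x : ℕ) {w w' : List ℕ} (h : w ≋ w') : (x :: w) ≋ (x :: w') := by
  simpa using h.append_left [x]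

/-- elementary commutation at the head -/
lemma beq_comm_head {i j : ℕ} (h : Dist2 i j) (w : List ℕ) :
    (i :: j :: w) ≋ (j :: i :: w) := by
  simpa using (Step.comm [] w h).beq

/-- elementary braid move at the head -/
lemma beq_braid_head {i j : ℕ} (h : Adj i j) (w : List ℕ) :
    (i :: j :: i :: w) ≋ (j :: i :: j :: w) := by
  simpa using (Step.braid [] w h).beq

lemma Step.length {w w' : List ℕ} (h : Step w w') : w.length = w'.length := by
  cases h <;> simp

lemma beq.length {w w' : List ℕ} (h : w ≋ w') : w.length = w'.length := by
  induction h with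
  | refl => rfl
  | tail _ hs ih => exact ih.trans hs.length

lemma Step.mem {w w' : List ℕ} (h : Step w w') : ∀ x ∈ w', x ∈ w := by
  cases h with
  | comm u v _ => intro x hx; simp at hx ⊢; tauto
  | braid u v _ => intro x hx; simp at hx ⊢; tauto

lemma beq.mem {w w' : List ℕ} (h : w ≋ w') : ∀ x ∈ w', x ∈ w := by
  induction h with
  | refl => exact fun x hx => hx
  | tail _ hs ih => exact fun x hx => ih x (hs.mem x hx)

lemma Step.reverse {w w' : List ℕ} (h : Step w w') : Step w.reverse w'.reverse := by
  cases h with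
  | comm u v h =>
      have := Step.comm (i := _) (j := _) v.reverse u.reverse h.symm
      simpa [List.reverse_append] using this
  | braid u v h =>
      have := Step.braid (i := _) (j := _) v.reverse u.reverse h
      simpa [List.reverse_append] using this
lemma beq.reverse {w w' : List ℕ} (h : w ≋ w') : w.reverse ≋ w'.reverse := by
  induction h with
  | refl => rfl
  | tail _ hs ih => exact ih.trans hs.reverse.beq

end Braid

namespace Braid

/-- The complement of `a` in `lcm(a,b)`: `a * compl a b = lcm(a,b) = b * compl b a`. -/
def compl (a b : ℕ) : List ℕ :=
  if a = b then [] else if a + 2 ≤ b ∨ b + 2 ≤ a then [b] else [b, a]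

@[simp] lemma compl_self (a : ℕ) : compl a a = [] := by simp [compl]

lemma compl_of_dist2 {a b : ℕ} (h : Dist2 a b) : compl a b = [b] := by
  have h1 := h.ne
  have h2 : a + 2 ≤ b ∨ b + 2 ≤ a := h
  simp [compl, h1, h2]

lemma compl_of_adj {a b : ℕ} (h : Adj a b) : compl a b = [b, a] := by
  have h1 := h.ne
  have h2 : ¬ (a + 2 ≤ b ∨ b + 2 ≤ a) := fun hd => not_adj_and_dist2 ⟨h, hd⟩
  simp [compl, h1, h2]

instance : Trans beq beq beq := ⟨beq.trans⟩

lemma step_cases {w w' : List ℕ} (h : Step w w') :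
    (∃ u v i j, Dist2 i j ∧ w = u ++ i :: j :: v ∧ w' = u ++ j :: i :: v) ∨
    (∃ u v i j, Adj i j ∧ w = u ++ i :: j :: i :: v ∧ w' = u ++ j :: i :: j :: v) := by
  cases h with
  | comm u v h => exact .inl ⟨u, v, _, _, h, rfl, rfl⟩
  | braid u v h => exact .inr ⟨u, v, _, _, h, rfl, rfl⟩

theorem head_aux : ∀ (F : ℕ) {a : ℕ} {u : List ℕ} {b : ℕ} {v : List ℕ},
    u.length < F → (a :: u) ≋ (b :: v) →
    ∃ t, u ≋ (compl a b ++ t) ∧ v ≋ (compl b a ++ t) := by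
  intro F
  induction F with
  | zero => intro a u b v hlen; omega
  | succ F IH =>
    intro a u b v hlen h
    suffices H : ∀ w, (a :: u) ≋ w → ∀ b' v', w = b' :: v' →
        ∃ t, u ≋ (compl a b' ++ t) ∧ v' ≋ (compl b' a ++ t) by
      exact H _ h b v rfl
    intro w hw
    induction hw with
    | refl =>
        intro b' v' hbv
        cases hbv
        exact ⟨u, by simpa using beq.rfl, by simpa using beq.rfl⟩
    | @tail w' w'' hchain hstep ih =>
        intro b' v' hbv
        subst hbv
        obtain ⟨c, v₁, rfl⟩ : ∃ c v₁, w' = c :: v₁ := by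
          have hl := beq.length hchain
          cases w' with
          | nil => simp at hl
          | cons c v₁ => exact ⟨c, v₁, rfl⟩
        obtain ⟨s, hs1, hs2⟩ := ih c v₁ rfl
        have hlv : v₁.length = u.length := by
          have := beq.length hchain; simpa using this.symm
        rcases step_cases hstep with ⟨u₀, v₀, i, j, hd, he1, he2⟩ | ⟨u₀, v₀, i, j, hd, he1, he2⟩
        · cases u₀ with
            | nil =>
                simp only [List.nil_append, List.cons.injEq] at he1 he2
                obtain ⟨h1, h2⟩ := he1
                obtain ⟨h3, h4⟩ := he2
                subst h2; subst h4
                have h1' := h1.symm; subst h1'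
                have h3' := h3.symm; subst h3'
                have hcancel : ∀ {x : ℕ} {p q : List ℕ}, p.length < F → (x :: p) ≋ (x :: q) → p ≋ q := by
                  intro x p q hl hpq
                  obtain ⟨t, h1, h2⟩ := IH hl hpq
                  simp only [compl_self, List.nil_append] at h1 h2
                  exact h1.trans h2.symm
                have hlu : v₀.length + 1 = u.length := by simpa using hlv
                by_cases hac : a = i
                · subst hac
                  simp only [compl_self, List.nil_append] at hs1 hs2
                  refine ⟨v₀, ?_, ?_⟩
                  · rw [compl_of_dist2 hd]
                    exact hs1.trans hs2.symm
                  · rw [compl_of_dist2 hd.symm]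
                    exact beq.rfl
                · by_cases had : a = j
                  · subst had
                    rw [compl_of_dist2 hd] at hs2
                    simp only [List.cons_append, List.nil_append] at hs2
                    have hs2' : v₀ ≋ s := hcancel (by omega) hs2
                    rw [compl_of_dist2 hd.symm] at hs1
                    simp only [List.cons_append, List.nil_append] at hs1
                    refine ⟨i :: v₀, ?_, ?_⟩
                    · rw [compl_self]
                      simp only [List.nil_append]
                      exact hs1.trans (hs2'.symm.cons i)
                    · rw [compl_self]
                      simp only [List.nil_append]
                      exact beq.rfl
                  · have hACne : a ≠ i := hac
                    have hADne : a ≠ j := had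
                    rcases adj_or_dist2 hACne with hAC | hAC <;>
                      rcases adj_or_dist2 hADne with hAD | hAD
                    · -- Adj a i, Adj a j  (case 3d)
                      rw [compl_of_adj hAC] at hs1
                      rw [compl_of_adj hAC.symm] at hs2
                      simp only [List.cons_append, List.nil_append] at hs1 hs2
                      have hLs : u.length = s.length + 2 := by
                        have := hs1.length; simp at this; omega
                      obtain ⟨r, hr1, hr2⟩ := IH (show v₀.length < F by omega) hs2
                      rw [compl_of_adj hAD.symm] at hr1
                      rw [compl_of_adj hAD] at hr2
                      simp only [List.cons_append, List.nil_append] at hr1 hr2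
                      obtain ⟨r', hq1, hq2⟩ := IH (show s.length < F by omega) hr2
                      rw [compl_of_dist2 hd] at hq1
                      rw [compl_of_dist2 hd.symm] at hq2
                      simp only [List.cons_append, List.nil_append] at hq1 hq2
                      have hLr : s.length = r.length + 1 := by
                        have := hr2.length; simp at this; omega
                      obtain ⟨r'', hp1, hp2⟩ := IH (show r.length < F by omega) hq2
                      rw [compl_of_adj hAC] at hp1
                      rw [compl_of_adj hAC.symm] at hp2
                      simp only [List.cons_append, List.nil_append] at hp1 hp2
                      refine ⟨i :: a :: j :: r'', ?_, ?_⟩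
                      · rw [compl_of_adj hAD]
                        simp only [List.cons_append, List.nil_append]
                        calc u ≋ i :: a :: s := hs1
                          _ ≋ i :: a :: j :: r' := (hq1.cons a).cons i
                          _ ≋ i :: a :: j :: a :: i :: r'' := ((hp2.cons j).cons a).cons i
                          _ ≋ i :: j :: a :: j :: i :: r'' := (beq_braid_head hAD (i :: r'')).cons i
                          _ ≋ j :: i :: a :: j :: i :: r'' := beq_comm_head hd _
                          _ ≋ j :: i :: a :: i :: j :: r'' :=
                            (((beq_comm_head hd.symm r'').cons a).cons i).cons j
                          _ ≋ j :: a :: i :: a :: j :: r'' :=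
                            (beq_braid_head hAC.symm (j :: r'')).cons j
                      · rw [compl_of_adj hAD.symm]
                        simp only [List.cons_append, List.nil_append]
                        calc i :: v₀ ≋ i :: a :: j :: r := hr1.cons i
                          _ ≋ i :: a :: j :: i :: a :: r'' := ((hp1.cons j).cons a).cons i
                          _ ≋ i :: a :: i :: j :: a :: r'' :=
                            ((beq_comm_head hd.symm (a :: r'')).cons a).cons i
                          _ ≋ a :: i :: a :: j :: a :: r'' :=
                            beq_braid_head hAC.symm (j :: a :: r'')
                          _ ≋ a :: i :: j :: a :: j :: r'' :=
                            ((beq_braid_head hAD r'').cons i).cons a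
                          _ ≋ a :: j :: i :: a :: j :: r'' :=
                            (beq_comm_head hd (a :: j :: r'')).cons a
                    · -- Adj a i, Dist2 a j (case 3c)
                      rw [compl_of_adj hAC] at hs1
                      rw [compl_of_adj hAC.symm] at hs2
                      simp only [List.cons_append, List.nil_append] at hs1 hs2
                      have hLs : u.length = s.length + 2 := by
                        have := hs1.length; simp at this; omega
                      obtain ⟨r, hr1, hr2⟩ := IH (show v₀.length < F by omega) hs2
                      rw [compl_of_dist2 hAD.symm] at hr1
                      rw [compl_of_dist2 hAD] at hr2
                      simp only [List.cons_append, List.nil_append] at hr1 hr2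
                      obtain ⟨r', hq1, hq2⟩ := IH (show s.length < F by omega) hr2
                      rw [compl_of_dist2 hd] at hq1
                      rw [compl_of_dist2 hd.symm] at hq2
                      simp only [List.cons_append, List.nil_append] at hq1 hq2
                      refine ⟨i :: a :: r', ?_, ?_⟩
                      · rw [compl_of_dist2 hAD]
                        simp only [List.cons_append, List.nil_append]
                        calc u ≋ i :: a :: s := hs1
                          _ ≋ i :: a :: j :: r' := (hq1.cons a).cons i
                          _ ≋ i :: j :: a :: r' := (beq_comm_head hAD r').cons i
                          _ ≋ j :: i :: a :: r' := beq_comm_head hd _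
                      · rw [compl_of_dist2 hAD.symm]
                        simp only [List.cons_append, List.nil_append]
                        calc i :: v₀ ≋ i :: a :: r := hr1.cons i
                          _ ≋ i :: a :: i :: r' := (hq2.cons a).cons i
                          _ ≋ a :: i :: a :: r' := beq_braid_head hAC.symm r'
                    · -- Dist2 a i, Adj a j (case 3b)
                      rw [compl_of_dist2 hAC] at hs1
                      rw [compl_of_dist2 hAC.symm] at hs2
                      simp only [List.cons_append, List.nil_append] at hs1 hs2
                      obtain ⟨r, hr1, hr2⟩ := IH (show v₀.length < F by omega) hs2
                      rw [compl_of_adj hAD.symm] at hr1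
                      rw [compl_of_adj hAD] at hr2
                      simp only [List.cons_append, List.nil_append] at hr1 hr2
                      refine ⟨i :: r, ?_, ?_⟩
                      · rw [compl_of_adj hAD]
                        simp only [List.cons_append, List.nil_append]
                        calc u ≋ i :: s := hs1
                          _ ≋ i :: j :: a :: r := hr2.cons i
                          _ ≋ j :: i :: a :: r := beq_comm_head hd _
                          _ ≋ j :: a :: i :: r := (beq_comm_head hAC.symm r).cons j
                      · rw [compl_of_adj hAD.symm]
                        simp only [List.cons_append, List.nil_append]
                        calc i :: v₀ ≋ i :: a :: j :: r := hr1.cons i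
                          _ ≋ a :: i :: j :: r := beq_comm_head hAC.symm _
                          _ ≋ a :: j :: i :: r := (beq_comm_head hd r).cons a
                    · -- Dist2 a i, Dist2 a j (case 3a)
                      rw [compl_of_dist2 hAC] at hs1
                      rw [compl_of_dist2 hAC.symm] at hs2
                      simp only [List.cons_append, List.nil_append] at hs1 hs2
                      obtain ⟨r, hr1, hr2⟩ := IH (show v₀.length < F by omega) hs2
                      rw [compl_of_dist2 hAD.symm] at hr1
                      rw [compl_of_dist2 hAD] at hr2
                      simp only [List.cons_append, List.nil_append] at hr1 hr2
                      refine ⟨i :: r, ?_, ?_⟩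
                      · rw [compl_of_dist2 hAD]
                        simp only [List.cons_append, List.nil_append]
                        calc u ≋ i :: s := hs1
                          _ ≋ i :: j :: r := hr2.cons i
                          _ ≋ j :: i :: r := beq_comm_head hd r
                      · rw [compl_of_dist2 hAD.symm]
                        simp only [List.cons_append, List.nil_append]
                        calc i :: v₀ ≋ i :: a :: r := hr1.cons i
                          _ ≋ a :: i :: r := beq_comm_head hAC.symm r
            | cons c' u₀' =>
                -- interior step
                obtain ⟨rfl, rfl⟩ : c = c' ∧ v₁ = u₀' ++ i :: j :: v₀ := by
                  constructor <;> injection ‹c :: v₁ = c' :: (u₀' ++ i :: j :: v₀)›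
                obtain ⟨rfl, rfl⟩ : b' = c ∧ v' = u₀' ++ j :: i :: v₀ := by
                  constructor <;> injection ‹b' :: v' = c :: (u₀' ++ j :: i :: v₀)›
                refine ⟨s, hs1, ?_⟩
                exact ((Step.comm u₀' v₀ hd).symm.beq).trans hs2
        · cases u₀ with
            | nil =>
                simp only [List.nil_append, List.cons.injEq] at he1 he2
                obtain ⟨h1, h2⟩ := he1
                obtain ⟨h3, h4⟩ := he2
                subst h2; subst h4
                have h1' := h1.symm; subst h1'
                have h3' := h3.symm; subst h3'
                have hcancel : ∀ {x : ℕ} {p q : List ℕ}, p.length < F → (x :: p) ≋ (x :: q) → p ≋ q := by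
                  intro x p q hl hpq
                  obtain ⟨t, h1, h2⟩ := IH hl hpq
                  simp only [compl_self, List.nil_append] at h1 h2
                  exact h1.trans h2.symm
                have hlu : v₀.length + 2 = u.length := by simpa using hlv
                by_cases hac : a = i
                · subst hac
                  simp only [compl_self, List.nil_append] at hs1 hs2
                  refine ⟨v₀, ?_, ?_⟩
                  · rw [compl_of_adj hd]
                    simp only [List.cons_append, List.nil_append]
                    exact hs1.trans hs2.symm
                  · rw [compl_of_adj hd.symm]
                    exact beq.rfl
                · by_cases had : a = j
                  · subst had
                    rw [compl_of_adj hd] at hs2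
                    rw [compl_of_adj hd.symm] at hs1
                    simp only [List.cons_append, List.nil_append] at hs1 hs2
                    have hx1 : (i :: v₀) ≋ (i :: s) := hcancel (by simp; omega) hs2
                    have hx2 : v₀ ≋ s := hcancel (by omega) hx1
                    refine ⟨i :: a :: s, ?_, ?_⟩
                    · rw [compl_self]
                      simp only [List.nil_append]
                      exact hs1
                    · rw [compl_self]
                      simp only [List.nil_append]
                      exact (hx2.cons a).cons i
                  · have hACne : a ≠ i := hac
                    have hADne : a ≠ j := had
                    rcases adj_or_dist2 hACne with hAC | hAC <;>
                      rcases adj_or_dist2 hADne with hAD | hAD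
                    · -- Adj a i, Adj a j, Adj i j : impossible
                      exfalso
                      rcases hAC with h | h <;> rcases hAD with h' | h' <;>
                        rcases hd with h'' | h'' <;> omega
                    · -- Adj a i, Dist2 a j (case iii 3c)
                      rw [compl_of_adj hAC] at hs1
                      rw [compl_of_adj hAC.symm] at hs2
                      simp only [List.cons_append, List.nil_append] at hs1 hs2
                      have hLs : u.length = s.length + 2 := by
                        have := hs1.length; simp at this; omega
                      obtain ⟨r, hr1, hr2⟩ := IH (show (i :: v₀).length < F by simp; omega) hs2
                      rw [compl_of_dist2 hAD.symm] at hr1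
                      rw [compl_of_dist2 hAD] at hr2
                      simp only [List.cons_append, List.nil_append] at hr1 hr2
                      obtain ⟨r₂, hp1, hp2⟩ := IH (show v₀.length < F by omega) hr1
                      rw [compl_of_adj hAC.symm] at hp1
                      rw [compl_of_adj hAC] at hp2
                      simp only [List.cons_append, List.nil_append] at hp1 hp2
                      obtain ⟨r₃, hq1, hq2⟩ := IH (show s.length < F by omega) hr2
                      rw [compl_of_adj hd] at hq1
                      rw [compl_of_adj hd.symm] at hq2
                      simp only [List.cons_append, List.nil_append] at hq1 hq2
                      have hLr : r₂.length + 1 < F := by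
                        have h₁ := hp1.length; simp at h₁; omega
                      have hcomb : (a :: r₂) ≋ (j :: r₃) := by
                        have hij : (i :: a :: r₂) ≋ (i :: j :: r₃) := hp2.symm.trans hq2
                        exact hcancel (by simp; omega) hij
                      obtain ⟨r₄, hx, hy⟩ := IH (by omega) hcomb
                      rw [compl_of_dist2 hAD] at hx
                      rw [compl_of_dist2 hAD.symm] at hy
                      simp only [List.cons_append, List.nil_append] at hx hy
                      refine ⟨i :: j :: a :: i :: r₄, ?_, ?_⟩
                      · rw [compl_of_dist2 hAD]
                        simp only [List.cons_append, List.nil_append]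
                        calc u ≋ i :: a :: s := hs1
                          _ ≋ i :: a :: j :: i :: r₃ := ((hq1.cons a).cons i)
                          _ ≋ i :: a :: j :: i :: a :: r₄ := (((hy.cons i).cons j).cons a).cons i
                          _ ≋ i :: j :: a :: i :: a :: r₄ :=
                            (beq_comm_head hAD (i :: a :: r₄)).cons i
                          _ ≋ i :: j :: i :: a :: i :: r₄ :=
                            ((beq_braid_head hAC.symm r₄).symm.cons j).cons i
                          _ ≋ j :: i :: j :: a :: i :: r₄ := beq_braid_head hd _
                      · rw [compl_of_dist2 hAD.symm]
                        simp only [List.cons_append, List.nil_append]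
                        calc i :: j :: v₀ ≋ i :: j :: a :: i :: r₂ := ((hp1.cons j).cons i)
                          _ ≋ i :: j :: a :: i :: j :: r₄ := (((hx.cons i).cons a).cons j).cons i
                          _ ≋ i :: a :: j :: i :: j :: r₄ :=
                            (beq_comm_head hAD.symm (i :: j :: r₄)).cons i
                          _ ≋ i :: a :: i :: j :: i :: r₄ :=
                            ((beq_braid_head hd.symm r₄).cons a).cons i
                          _ ≋ a :: i :: a :: j :: i :: r₄ :=
                            beq_braid_head hAC.symm (j :: i :: r₄)
                          _ ≋ a :: i :: j :: a :: i :: r₄ :=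
                            ((beq_comm_head hAD (i :: r₄)).cons i).cons a
                    · -- Dist2 a i, Adj a j (case iii 3b)
                      rw [compl_of_dist2 hAC] at hs1
                      rw [compl_of_dist2 hAC.symm] at hs2
                      simp only [List.cons_append, List.nil_append] at hs1 hs2
                      have hLs : u.length = s.length + 1 := by
                        have := hs1.length; simp at this; omega
                      obtain ⟨r, hr1, hr2⟩ := IH (show (i :: v₀).length < F by simp; omega) hs2
                      rw [compl_of_adj hAD.symm] at hr1
                      rw [compl_of_adj hAD] at hr2
                      simp only [List.cons_append, List.nil_append] at hr1 hr2
                      obtain ⟨r₂, hp1, hp2⟩ := IH (show v₀.length < F by omega) hr1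
                      rw [compl_of_dist2 hAC.symm] at hp1
                      rw [compl_of_dist2 hAC] at hp2
                      simp only [List.cons_append, List.nil_append] at hp1 hp2
                      have hLr : r.length < F := by
                        have := hr1.length; simp at this; omega
                      obtain ⟨r₃, hq1, hq2⟩ := IH hLr hp2
                      rw [compl_of_adj hd.symm] at hq1
                      rw [compl_of_adj hd] at hq2
                      simp only [List.cons_append, List.nil_append] at hq1 hq2
                      refine ⟨i :: j :: a :: r₃, ?_, ?_⟩
                      · rw [compl_of_adj hAD]
                        simp only [List.cons_append, List.nil_append]
                        calc u ≋ i :: s := hs1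
                          _ ≋ i :: j :: a :: r := hr2.cons i
                          _ ≋ i :: j :: a :: i :: j :: r₃ := (((hq1.cons a).cons j).cons i)
                          _ ≋ i :: j :: i :: a :: j :: r₃ :=
                            ((beq_comm_head hAC (j :: r₃)).cons j).cons i
                          _ ≋ j :: i :: j :: a :: j :: r₃ := beq_braid_head hd _
                          _ ≋ j :: i :: a :: j :: a :: r₃ :=
                            ((beq_braid_head hAD.symm r₃).cons i).cons j
                          _ ≋ j :: a :: i :: j :: a :: r₃ :=
                            (beq_comm_head hAC.symm (j :: a :: r₃)).cons j
                      · rw [compl_of_adj hAD.symm]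
                        simp only [List.cons_append, List.nil_append]
                        calc i :: j :: v₀ ≋ i :: j :: a :: r₂ := (hp1.cons j).cons i
                          _ ≋ i :: j :: a :: j :: i :: r₃ := (((hq2.cons a).cons j).cons i)
                          _ ≋ i :: a :: j :: a :: i :: r₃ :=
                            ((beq_braid_head hAD.symm (i :: r₃)).cons i)
                          _ ≋ a :: i :: j :: a :: i :: r₃ := by
                            have := beq_comm_head hAC.symm (j :: a :: i :: r₃)
                            exact this
                          _ ≋ a :: i :: j :: i :: a :: r₃ :=
                            (((beq_comm_head hAC r₃).cons j).cons i).cons a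
                          _ ≋ a :: j :: i :: j :: a :: r₃ :=
                            ((beq_braid_head hd (a :: r₃)).cons a)
                    · -- Dist2 a i, Dist2 a j (case iii 3a)
                      rw [compl_of_dist2 hAC] at hs1
                      rw [compl_of_dist2 hAC.symm] at hs2
                      simp only [List.cons_append, List.nil_append] at hs1 hs2
                      obtain ⟨r, hr1, hr2⟩ := IH (show (i :: v₀).length < F by simp; omega) hs2
                      rw [compl_of_dist2 hAD.symm] at hr1
                      rw [compl_of_dist2 hAD] at hr2
                      simp only [List.cons_append, List.nil_append] at hr1 hr2
                      obtain ⟨r', hp1, hp2⟩ := IH (show v₀.length < F by omega) hr1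
                      rw [compl_of_dist2 hAC.symm] at hp1
                      rw [compl_of_dist2 hAC] at hp2
                      simp only [List.cons_append, List.nil_append] at hp1 hp2
                      refine ⟨i :: j :: r', ?_, ?_⟩
                      · rw [compl_of_dist2 hAD]
                        simp only [List.cons_append, List.nil_append]
                        calc u ≋ i :: s := hs1
                          _ ≋ i :: j :: r := hr2.cons i
                          _ ≋ i :: j :: i :: r' := (hp2.cons j).cons i
                          _ ≋ j :: i :: j :: r' := beq_braid_head hd r'
                      · rw [compl_of_dist2 hAD.symm]
                        simp only [List.cons_append, List.nil_append]
                        calc i :: j :: v₀ ≋ i :: j :: a :: r' := (hp1.cons j).cons i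
                          _ ≋ i :: a :: j :: r' := (beq_comm_head hAD.symm r').cons i
                          _ ≋ a :: i :: j :: r' := beq_comm_head hAC.symm (j :: r')
            | cons c' u₀' =>
                obtain ⟨rfl, rfl⟩ : c = c' ∧ v₁ = u₀' ++ i :: j :: i :: v₀ := by
                  constructor <;> injection ‹c :: v₁ = c' :: (u₀' ++ i :: j :: i :: v₀)›
                obtain ⟨rfl, rfl⟩ : b' = c ∧ v' = u₀' ++ j :: i :: j :: v₀ := by
                  constructor <;> injection ‹b' :: v' = c :: (u₀' ++ j :: i :: j :: v₀)›
                refine ⟨s, hs1, ?_⟩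
                exact ((Step.braid u₀' v₀ hd).symm.beq).trans hs2

end Braid

namespace Braid

theorem head_lemma {a b : ℕ} {u v : List ℕ} (h : (a :: u) ≋ (b :: v)) :
    ∃ t, u ≋ (compl a b ++ t) ∧ v ≋ (compl b a ++ t) :=
  head_aux (u.length + 1) (by omega) h

lemma cancel_cons {x : ℕ} {u v : List ℕ} (h : (x :: u) ≋ (x :: v)) : u ≋ v := by
  obtain ⟨t, h1, h2⟩ := head_lemma h
  simp only [compl_self, List.nil_append] at h1 h2
  exact h1.trans h2.symm

lemma cancel_left {u v : List ℕ} (p : List ℕ) (h : (p ++ u) ≋ (p ++ v)) : u ≋ v := by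
  induction p with
  | nil => simpa using h
  | cons x p ih => exact ih (cancel_cons (by simpa using h))

lemma cancel_right {u v : List ℕ} (q : List ℕ) (h : (u ++ q) ≋ (v ++ q)) : u ≋ v := by
  have hr : (q.reverse ++ u.reverse) ≋ (q.reverse ++ v.reverse) := by
    simpa [List.reverse_append] using h.reverse
  have := (cancel_left q.reverse hr).reverse
  simpa using this

lemma lcm_letters (a b : ℕ) : (a :: compl a b) ≋ (b :: compl b a) := by
  by_cases hab : a = b
  · subst hab; exact beq.rfl
  · rcases adj_or_dist2 hab with h | h
    · rw [compl_of_adj h, compl_of_adj h.symm]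
      simpa using beq_braid_head h []
    · rw [compl_of_dist2 h, compl_of_dist2 h.symm]
      simpa using beq_comm_head h []

/-- Conditional right lcm with full universal property. -/
theorem lcm_aux : ∀ (L : ℕ) (u v m x y : List ℕ), m.length ≤ L →
    m ≋ (u ++ x) → m ≋ (v ++ y) →
    ∃ cu cv, (u ++ cu) ≋ (v ++ cv) ∧
      ∀ x' y', (u ++ x') ≋ (v ++ y') → ∃ t, x' ≋ (cu ++ t) ∧ y' ≋ (cv ++ t) := by
  intro L
  induction L with
  | zero =>
      intro u v m x y hL hu hv
      -- m is empty, so u and v are empty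
      have hu0 : u = [] := by
        have h := hu.length; simp at h
        exact List.eq_nil_of_length_eq_zero (by omega)
      have hv0 : v = [] := by
        have h := hv.length; simp at h
        exact List.eq_nil_of_length_eq_zero (by omega)
      subst hu0; subst hv0
      exact ⟨[], [], beq.rfl, fun x' y' h => ⟨x', by simpa using beq.rfl, by simpa using h.symm⟩⟩
  | succ L IH =>
      intro u v m x y hL hu hv
      cases u with
      | nil =>
          refine ⟨v, [], by simpa using beq.rfl, fun x' y' h => ⟨y', by simpa using h, by simpa using beq.rfl⟩⟩
      | cons a u' =>
        cases v with
        | nil =>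
            refine ⟨[], a :: u', by simpa using beq.rfl, fun x' y' h => ⟨x', by simpa using beq.rfl, by simpa using h.symm⟩⟩
        | cons b v' =>
            have hm : ((a :: u') ++ x) ≋ ((b :: v') ++ y) := hu.symm.trans hv
            have hmlen : u'.length + x.length + 1 = m.length := by
              have := hu.length; simp at this; omega
            by_cases hab : a = b
            · subst hab
              have hc : (u' ++ x) ≋ (v' ++ y) := cancel_cons (by simpa using hm)
              obtain ⟨cu, cv, hl, huniv⟩ :=
                IH u' v' (u' ++ x) x y (by simp; omega) beq.rfl hc
              refine ⟨cu, cv, by simpa using hl.cons a, ?_⟩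
              intro x' y' h
              exact huniv x' y' (cancel_cons (by simpa using h))
            · -- heads differ
              have hm' : (a :: (u' ++ x)) ≋ (b :: (v' ++ y)) := by simpa using hm
              obtain ⟨t₀, ht1, ht2⟩ := head_lemma hm'
              -- lcm of u' and compl a b
              obtain ⟨c₁, d₁, hl1, hU1⟩ :=
                IH u' (compl a b) (u' ++ x) x t₀ (by simp; omega) beq.rfl ht1
              obtain ⟨t₁, hx1, hd1⟩ := hU1 x t₀ ht1
              -- lcm of v' and compl b a
              have hvy : v'.length + y.length + 1 = m.length := by
                have := hv.length; simp at this; omega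
              obtain ⟨c₂, d₂, hl2, hU2⟩ :=
                IH v' (compl b a) (v' ++ y) y t₀ (by simp; omega) beq.rfl ht2
              obtain ⟨t₂, hy2, hd2⟩ := hU2 y t₀ ht2
              -- lcm of d₁ and d₂, with common multiple t₀
              have ht0len : t₀.length ≤ L := by
                have h1 := ht1.length
                have h2 : 1 ≤ (compl a b).length := by
                  rcases adj_or_dist2 hab with h | h
                  · rw [compl_of_adj h]; simp
                  · rw [compl_of_dist2 h]; simp
                simp at h1; omega
              obtain ⟨e₁, e₂, hl3, hU3⟩ :=
                IH d₁ d₂ t₀ t₁ t₂ ht0len (hd1.trans beq.rfl) (hd2.trans beq.rfl)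
              refine ⟨c₁ ++ e₁, c₂ ++ e₂, ?_, ?_⟩
              · -- (a :: u') ++ (c₁ ++ e₁) ≋ (b :: v') ++ (c₂ ++ e₂)
                calc ((a :: u') ++ (c₁ ++ e₁) : List ℕ)
                    = a :: (u' ++ c₁) ++ e₁ := by simp
                  _ ≋ a :: (compl a b ++ d₁) ++ e₁ := by
                      exact ((hl1.append_right e₁).cons a)
                  _ = a :: compl a b ++ (d₁ ++ e₁) := by simp
                  _ ≋ a :: compl a b ++ (d₂ ++ e₂) := by
                      exact (hl3.append_left (a :: compl a b))
                  _ = (a :: compl a b) ++ (d₂ ++ e₂) := by simp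
                  _ ≋ (b :: compl b a) ++ (d₂ ++ e₂) := (lcm_letters a b).append_right _
                  _ = b :: (compl b a ++ d₂) ++ e₂ := by simp
                  _ ≋ b :: (v' ++ c₂) ++ e₂ := (hl2.symm.append_right e₂).cons b
                  _ = (b :: v') ++ (c₂ ++ e₂) := by simp
              · intro x' y' h
                have h' : (a :: (u' ++ x')) ≋ (b :: (v' ++ y')) := by simpa using h
                obtain ⟨t₀', hp1, hp2⟩ := head_lemma h'
                obtain ⟨t₁', hq1, hq2⟩ := hU1 x' t₀' hp1
                obtain ⟨t₂', hr1, hr2⟩ := hU2 y' t₀' hp2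
                obtain ⟨f, hf1, hf2⟩ := hU3 t₁' t₂' (hq2.symm.trans hr2)
                refine ⟨f, ?_, ?_⟩
                · calc x' ≋ c₁ ++ t₁' := hq1
                    _ ≋ c₁ ++ (e₁ ++ f) := hf1.append_left c₁
                    _ = (c₁ ++ e₁) ++ f := by simp
                · calc y' ≋ c₂ ++ t₂' := hr1
                    _ ≋ c₂ ++ (e₂ ++ f) := hf2.append_left c₂
                    _ = (c₂ ++ e₂) ++ f := by simp

theorem lcm_spec (u v x y : List ℕ) (h : (u ++ x) ≋ (v ++ y)) :
    ∃ cu cv, (u ++ cu) ≋ (v ++ cv) ∧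
      ∀ x' y', (u ++ x') ≋ (v ++ y') → ∃ t, x' ≋ (cu ++ t) ∧ y' ≋ (cv ++ t) :=
  lcm_aux (u ++ x).length u v (u ++ x) x y le_rfl beq.rfl h

end Braid

namespace Braid

def run : ℕ → List ℕ
  | 0 => [0]
  | m + 1 => (m + 1) :: run m

def delta : ℕ → List ℕ
  | 0 => []
  | m + 1 => delta m ++ run m

def dpow (M : ℕ) : ℕ → List ℕ
  | 0 => []
  | k + 1 => delta M ++ dpow M k

lemma run_mem : ∀ m, ∀ x ∈ run m, x ≤ m := by
  intro m
  induction m with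
  | zero => intro x hx; simp [run] at hx; omega
  | succ m ih => intro x hx; simp [run] at hx; rcases hx with rfl | hx; · omega
                 · have := ih x hx; omega

lemma delta_mem : ∀ M, ∀ x ∈ delta M, x < M := by
  intro M
  induction M with
  | zero => intro x hx; simp [delta] at hx
  | succ m ih =>
      intro x hx; simp [delta] at hx
      rcases hx with hx | hx
      · have := ih x hx; omega
      · have := run_mem m x hx; omega

lemma comm_past {x : ℕ} {w : List ℕ} (h : ∀ y ∈ w, Dist2 x y) : (w ++ [x]) ≋ (x :: w) := by
  induction w with
  | nil => exact beq.rfl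
  | cons y w ih =>
      have : (y :: (w ++ [x])) ≋ (y :: x :: w) := (ih (fun z hz => h z (by simp [hz]))).cons y
      exact this.trans (beq_comm_head (h y (by simp)).symm w)

lemma row_lemma : ∀ m j, 1 ≤ j → j ≤ m → (run m ++ [j]) ≋ ((j - 1) :: run m) := by
  intro m
  induction m with
  | zero => intro j h1 h2; omega
  | succ m ih =>
      intro j h1 h2
      by_cases hj : j ≤ m
      · have step : ((m+1) :: (run m ++ [j])) ≋ ((m+1) :: (j-1) :: run m) := (ih j h1 hj).cons (m+1)
        have comm : ((m+1) :: (j-1) :: run m) ≋ ((j-1) :: (m+1) :: run m) :=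
          beq_comm_head (by unfold Dist2; omega) (run m)
        exact (step.trans comm)
      · have hj1 : j = m + 1 := by omega
        subst hj1
        cases m with
        | zero =>
            show ([1, 0, 1] : List ℕ) ≋ [0, 1, 0]
            exact beq_braid_head (by unfold Adj; omega) []
        | succ m' =>
            show ((m'+2) :: (m'+1) :: (run m' ++ [m'+2])) ≋ ((m'+1) :: (m'+2) :: (m'+1) :: run m')
            have hc : (run m' ++ [m'+2]) ≋ ((m'+2) :: run m') :=
              comm_past (fun y hy => by have := run_mem m' y hy; unfold Dist2; omega)
            have s1 : ((m'+2) :: (m'+1) :: (run m' ++ [m'+2])) ≋ ((m'+2) :: (m'+1) :: (m'+2) :: run m') :=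
              (hc.cons (m'+1)).cons (m'+2)
            exact s1.trans (beq_braid_head (by unfold Adj; omega) (run m'))

lemma row_lemma' : ∀ m j, 1 ≤ j → j ≤ m →
    ((j : ℕ) :: (run m).reverse) ≋ ((run m).reverse ++ [j - 1]) := by
  intro m j h1 h2
  have := (row_lemma m j h1 h2).reverse
  simpa using this

lemma delta_L : ∀ m, delta (m + 1) ≋ ((run m).reverse ++ delta m) := by
  intro m
  induction m with
  | zero => exact beq.rfl
  | succ m ih =>
      show (delta (m+1) ++ run (m+1)) ≋ _
      have s1 : (delta (m+1) ++ run (m+1)) ≋ (((run m).reverse ++ delta m) ++ run (m+1)) :=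
        ih.append_right _
      have hc : (delta m ++ [m+1]) ≋ ((m+1) :: delta m) :=
        comm_past (fun y hy => by have := delta_mem m y hy; unfold Dist2; omega)
      have s2 : (((run m).reverse ++ delta m) ++ run (m+1)) ≋
          ((run m).reverse ++ ((m+1) :: (delta m ++ run m))) := by
        have : (delta m ++ run (m+1)) ≋ ((m+1) :: (delta m ++ run m)) := by
          show (delta m ++ ((m+1) :: run m)) ≋ _
          calc (delta m ++ ((m+1) :: run m)) = (delta m ++ [m+1]) ++ run m := by simp
            _ ≋ ((m+1) :: delta m) ++ run m := hc.append_right _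
            _ = (m+1) :: (delta m ++ run m) := by simp
        simpa [List.append_assoc] using this.append_left (run m).reverse
      have : (delta (m+1) ++ run (m+1)) ≋ ((run m).reverse ++ ((m+1) :: (delta m ++ run m))) :=
        s1.trans s2
      simpa [run, delta, List.reverse_cons, List.append_assoc] using this

lemma tau_comm : ∀ m j, j < m → (delta m ++ [j]) ≋ ((m - 1 - j) :: delta m) := by
  intro m
  induction m with
  | zero => intro j h; omega
  | succ m ih =>
      intro j hj
      by_cases hj1 : 1 ≤ j
      · show ((delta m ++ run m) ++ [j]) ≋ _
        calc ((delta m ++ run m) ++ [j]) = delta m ++ (run m ++ [j]) := by simp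
          _ ≋ delta m ++ ((j-1) :: run m) := (row_lemma m j hj1 (by omega)).append_left _
          _ = (delta m ++ [j-1]) ++ run m := by simp
          _ ≋ ((m - 1 - (j-1)) :: delta m) ++ run m := (ih (j-1) (by omega)).append_right _
          _ = (m + 1 - 1 - j) :: (delta m ++ run m) := by
              have : m - 1 - (j - 1) = m + 1 - 1 - j := by omega
              simp [this]
      · have hj0 : j = 0 := by omega
        subst hj0
        cases m with
        | zero => exact beq.rfl
        | succ m' =>
            have hD := delta_L (m' + 1)
            calc (delta (m'+2) ++ [0]) ≋ (((run (m'+1)).reverse ++ delta (m'+1)) ++ [0]) :=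
                hD.append_right _
              _ = (run (m'+1)).reverse ++ (delta (m'+1) ++ [0]) := by simp
              _ ≋ (run (m'+1)).reverse ++ ((m' + 1 - 1 - 0) :: delta (m'+1)) :=
                (ih 0 (by omega)).append_left _
              _ = ((run (m'+1)).reverse ++ [m' + 1 - 1]) ++ delta (m'+1) := by simp
              _ ≋ ((m'+1) :: (run (m'+1)).reverse) ++ delta (m'+1) := by
                  have := (row_lemma' (m'+1) (m'+1) (by omega) le_rfl).symm
                  have h2 : m' + 1 - 1 = m' + 1 - 1 - 0 := by omega
                  exact (by simpa using this.append_right (delta (m'+1)))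
              _ = (m'+1) :: ((run (m'+1)).reverse ++ delta (m'+1)) := by simp
              _ ≋ ((m'+1) :: delta (m'+2)) := hD.symm.cons _
              _ = (m' + 2 - 1 - 0) :: delta (m'+2) := by norm_num

lemma tau_word (M : ℕ) : ∀ w : List ℕ, (∀ x ∈ w, x < M) →
    (delta M ++ w) ≋ (w.map (fun j => M - 1 - j) ++ delta M) := by
  intro w
  induction w with
  | nil => intro _; simp; exact beq.rfl
  | cons j w ih =>
      intro h
      calc (delta M ++ (j :: w)) = (delta M ++ [j]) ++ w := by simp
        _ ≋ ((M - 1 - j) :: delta M) ++ w := (tau_comm M j (h j (by simp))).append_right w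
        _ = (M - 1 - j) :: (delta M ++ w) := by simp
        _ ≋ (M - 1 - j) :: (w.map (fun j => M - 1 - j) ++ delta M) :=
            (ih (fun x hx => h x (by simp [hx]))).cons _
        _ = ((j :: w).map (fun j => M - 1 - j) ++ delta M) := by simp

lemma run_run (k : ℕ) : ∃ w, (run k ++ run (k + 1)) ≋ ((k + 1) :: w) := by
  induction k with
  | zero =>
      refine ⟨[0, 1], ?_⟩
      show ([0] ++ [1, 0] : List ℕ) ≋ [1, 0, 1]
      have := beq_braid_head (i := 0) (j := 1) (Or.inl rfl) ([] : List ℕ)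
      simpa using this
  | succ k ih =>
      obtain ⟨w, hw⟩ := ih
      refine ⟨(k+1) :: (k+2) :: w, ?_⟩
      have hc : (run k ++ [k+2]) ≋ ((k+2) :: run k) :=
        comm_past (fun y hy => by have := run_mem k y hy; unfold Dist2; omega)
      calc (run (k+1) ++ run (k+2)) = (k+1) :: ((run k ++ [k+2]) ++ run (k+1)) := by
            show ((k+1) :: run k) ++ ((k+2) :: run (k+1)) = _
            simp
        _ ≋ (k+1) :: (((k+2) :: run k) ++ run (k+1)) := (hc.append_right _).cons _
        _ = (k+1) :: (k+2) :: (run k ++ run (k+1)) := by simp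
        _ ≋ (k+1) :: (k+2) :: (k+1) :: w := (hw.cons _).cons _
        _ ≋ (k+2) :: (k+1) :: (k+2) :: w := beq_braid_head (by unfold Adj; omega) w

lemma letter_dvd_delta : ∀ M j, j < M → ∃ r, delta M ≋ (j :: r) := by
  intro M
  induction M with
  | zero => intro j h; omega
  | succ m ih =>
      intro j hj
      by_cases hjm : j < m
      · obtain ⟨r, hr⟩ := ih j hjm
        exact ⟨r ++ run m, by simpa [delta] using hr.append_right (run m)⟩
      · have hj' : j = m := by omega
        subst hj'
        cases j with
        | zero => exact ⟨[], by simp [delta, run]; exact beq.rfl⟩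
        | succ m' =>
            obtain ⟨w, hw⟩ := run_run m'
            refine ⟨delta m' ++ w, ?_⟩
            have e1 : delta (m' + 2) = delta m' ++ (run m' ++ run (m'+1)) := by
              show (delta m' ++ run m') ++ run (m'+1) = _
              simp
            have hc : (delta m' ++ [m'+1]) ≋ ((m'+1) :: delta m') :=
              comm_past (fun y hy => by have := delta_mem m' y hy; unfold Dist2; omega)
            calc delta (m'+2) = delta m' ++ (run m' ++ run (m'+1)) := e1
              _ ≋ delta m' ++ ((m'+1) :: w) := hw.append_left _
              _ = (delta m' ++ [m'+1]) ++ w := by simp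
              _ ≋ ((m'+1) :: delta m') ++ w := hc.append_right w
              _ = (m'+1) :: (delta m' ++ w) := by simp

lemma dpow_mem (M : ℕ) : ∀ k, ∀ x ∈ dpow M k, x < M := by
  intro k
  induction k with
  | zero => intro x hx; simp [dpow] at hx
  | succ k ih =>
      intro x hx
      simp [dpow] at hx
      rcases hx with hx | hx
      · exact delta_mem M x hx
      · exact ih x hx

lemma dpow_add (M a b : ℕ) : dpow M (a + b) = dpow M a ++ dpow M b := by
  induction a with
  | zero => simp [dpow]
  | succ a ih =>
      have h : a + 1 + b = (a + b) + 1 := by omega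
      rw [h]
      show delta M ++ dpow M (a + b) = (delta M ++ dpow M a) ++ dpow M b
      rw [ih, List.append_assoc]

lemma word_comm_dpow (M : ℕ) : ∀ k (w : List ℕ), (∀ x ∈ w, x < M) →
    ∃ w', (∀ x ∈ w', x < M) ∧ (w ++ dpow M k) ≋ (dpow M k ++ w') := by
  intro k
  induction k with
  | zero => intro w hw; exact ⟨w, hw, by simpa [dpow] using beq.rfl⟩
  | succ k ih =>
      intro w hw
      have htau : ∀ x ∈ w.map (fun j => M - 1 - j), x < M := by
        intro x hx
        simp at hx
        obtain ⟨j, hj, rfl⟩ := hx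
        have := hw j hj; omega
      obtain ⟨w', hw', h⟩ := ih (w.map (fun j => M - 1 - j)) htau
      refine ⟨w', hw', ?_⟩
      have hmm : (w ++ delta M) ≋ (delta M ++ w.map (fun j => M - 1 - j)) := by
        have h2 := tau_word M (w.map (fun j => M - 1 - j)) htau
        have h3 : (w.map (fun j => M - 1 - j)).map (fun j => M - 1 - j) = w := by
          rw [List.map_map]
          have : ∀ x ∈ w, (M - 1 - (M - 1 - x)) = x := fun x hx => by have := hw x hx; omega
          calc w.map ((fun j => M - 1 - j) ∘ (fun j => M - 1 - j)) = w.map id := by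
                apply List.map_congr_left; intro x hx; simpa using this x hx
            _ = w := by simp
        rw [h3] at h2
        exact h2.symm
      calc (w ++ dpow M (k+1)) = (w ++ delta M) ++ dpow M k := by simp [dpow]
        _ ≋ (delta M ++ w.map (fun j => M - 1 - j)) ++ dpow M k := hmm.append_right _
        _ = delta M ++ (w.map (fun j => M - 1 - j) ++ dpow M k) := by simp
        _ ≋ delta M ++ (dpow M k ++ w') := h.append_left _
        _ = dpow M (k+1) ++ w' := by simp [dpow]

lemma dvd_dpow : ∀ (u : List ℕ) (M : ℕ), (∀ x ∈ u, x < M) →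
    ∃ w, (u ++ w) ≋ dpow M u.length := by
  intro u
  induction u with
  | nil => intro M _; exact ⟨[], by simpa [dpow] using beq.rfl⟩
  | cons a u' ih =>
      intro M hM
      obtain ⟨w, hw⟩ := ih M (fun x hx => hM x (by simp [hx]))
      obtain ⟨r, hr⟩ := letter_dvd_delta M a (hM a (by simp))
      have hrmem : ∀ x ∈ r, x < M := by
        intro x hx
        exact delta_mem M x (hr.mem x (by simp [hx]))
      obtain ⟨r', _, hcomm⟩ := word_comm_dpow M u'.length r hrmem
      refine ⟨w ++ r', ?_⟩
      have : dpow M (u'.length + 1) = delta M ++ dpow M u'.length := by simp [dpow]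
      calc ((a :: u') ++ (w ++ r')) = a :: ((u' ++ w) ++ r') := by simp
        _ ≋ a :: (dpow M u'.length ++ r') := (hw.append_right r').cons a
        _ ≋ a :: (r ++ dpow M u'.length) := (hcomm.symm.cons a)
        _ = (a :: r) ++ dpow M u'.length := by simp
        _ ≋ delta M ++ dpow M u'.length := hr.symm.append_right _
        _ = dpow M ((a :: u').length) := by simp [dpow]

/-- Any two positive words admit a common right multiple. -/
lemma common_right_multiple (u v : List ℕ) : ∃ x y, (u ++ x) ≋ (v ++ y) := by
  set M := (u ++ v).sum + 1 with hM
  have hu : ∀ z ∈ u, z < M := by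
    intro z hz
    have : z ≤ (u ++ v).sum := List.single_le_sum (fun _ _ => Nat.zero_le _) z (by simp [hz])
    omega
  have hv : ∀ z ∈ v, z < M := by
    intro z hz
    have : z ≤ (u ++ v).sum := List.single_le_sum (fun _ _ => Nat.zero_le _) z (by simp [hz])
    omega
  obtain ⟨x, hx⟩ := dvd_dpow u M hu
  obtain ⟨y, hy⟩ := dvd_dpow v M hv
  set K := max u.length v.length with hK
  refine ⟨x ++ dpow M (K - u.length), y ++ dpow M (K - v.length), ?_⟩
  have e1 : dpow M K = dpow M u.length ++ dpow M (K - u.length) := by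
    rw [← dpow_add]; congr 1; omega
  have e2 : dpow M K = dpow M v.length ++ dpow M (K - v.length) := by
    rw [← dpow_add]; congr 1; omega
  calc (u ++ (x ++ dpow M (K - u.length))) = (u ++ x) ++ dpow M (K - u.length) := by simp
    _ ≋ dpow M u.length ++ dpow M (K - u.length) := hx.append_right _
    _ = dpow M K := e1.symm
    _ = dpow M v.length ++ dpow M (K - v.length) := e2
    _ ≋ (v ++ y) ++ dpow M (K - v.length) := hy.symm.append_right _
    _ = v ++ (y ++ dpow M (K - v.length)) := by simp

/-- Any two positive words admit a common left multiple. -/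
lemma common_left_multiple (u v : List ℕ) : ∃ x y, (x ++ u) ≋ (y ++ v) := by
  obtain ⟨x, y, h⟩ := common_right_multiple u.reverse v.reverse
  refine ⟨x.reverse, y.reverse, ?_⟩
  have := h.reverse
  simpa [List.reverse_append] using this

end Braid

namespace Braid

instance bSetoid : Setoid (List ℕ) :=
  ⟨beq, fun _ => beq.rfl, fun h => h.symm, fun h h' => h.trans h'⟩

/-- The positive braid monoid on infinitely many strands. -/
def PB : Type := Quotient bSetoid

def mk (w : List ℕ) : PB := Quotient.mk bSetoid w

lemma mk_eq_mk {u v : List ℕ} : mk u = mk v ↔ u ≋ v :=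
  ⟨fun h => Quotient.exact h, fun h => Quotient.sound h⟩

instance : Monoid PB where
  mul := Quotient.map₂ (· ++ ·) (fun _ _ h _ _ h' => h.append h')
  one := mk []
  mul_assoc a b c := by
    induction a using Quotient.ind
    induction b using Quotient.ind
    induction c using Quotient.ind
    apply Quotient.sound
    simp [List.append_assoc]
  one_mul a := by
    induction a using Quotient.ind
    apply Quotient.sound
    exact beq.rfl
  mul_one a := by
    induction a using Quotient.ind
    apply Quotient.sound
    simp

lemma mk_mul (u v : List ℕ) : mk u * mk v = mk (u ++ v) := rfl

lemma mk_one : (1 : PB) = mk [] := rfl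

lemma PB.left_cancel {a b c : PB} (h : a * b = a * c) : b = c := by
  induction a using Quotient.ind with | _ u =>
  induction b using Quotient.ind with | _ v =>
  induction c using Quotient.ind with | _ w =>
  exact Quotient.sound (cancel_left u (Quotient.exact h))

lemma PB.right_cancel {a b c : PB} (h : b * a = c * a) : b = c := by
  induction a using Quotient.ind with | _ u =>
  induction b using Quotient.ind with | _ v =>
  induction c using Quotient.ind with | _ w =>
  exact Quotient.sound (cancel_right u (Quotient.exact h))

lemma PB.common_left (r s : PB) : ∃ r' s' : PB, s' * r = r' * s := by
  induction r using Quotient.ind with | _ u =>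
  induction s using Quotient.ind with | _ v =>
  obtain ⟨x, y, h⟩ := common_left_multiple u v
  exact ⟨mk y, mk x, Quotient.sound h⟩

/-- one = mk of the empty word, and positive words of equal product are equivalent;
    a product being 1 forces both factors to be 1. -/
lemma PB.mul_eq_one {a b : PB} (h : a * b = 1) : a = 1 ∧ b = 1 := by
  induction a using Quotient.ind with | _ u =>
  induction b using Quotient.ind with | _ v =>
  have h' : (u ++ v) ≋ [] := Quotient.exact h
  have := h'.length
  simp at this
  obtain ⟨hu, hv⟩ := this
  constructor <;> apply Quotient.sound
  · rw [hu]
  · rw [hv]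

noncomputable instance PBOre : OreLocalization.OreSet (⊤ : Submonoid PB) where
  ore_right_cancel r₁ r₂ s h := ⟨1, by simpa using PB.right_cancel h⟩
  oreNum r s := Classical.choose (PB.common_left r (s : PB))
  oreDenom r s := ⟨Classical.choose (Classical.choose_spec (PB.common_left r (s : PB))),
    trivial⟩
  ore_eq r s := Classical.choose_spec (Classical.choose_spec (PB.common_left r (s : PB)))

/-- The Ore localization (group of fractions) of the positive braid monoid. -/
def FracPB : Type := OreLocalization (⊤ : Submonoid PB) PB

noncomputable instance : Monoid FracPB :=
  inferInstanceAs (Monoid (OreLocalization (⊤ : Submonoid PB) PB))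

noncomputable def ι : PB →* FracPB :=
  OreLocalization.numeratorHom

lemma ι_injective : Function.Injective ι := by
  intro a b h
  have h0 : OreLocalization.numeratorHom a = OreLocalization.numeratorHom b := h
  have h' : a /ₒ (1 : (⊤ : Submonoid PB)) = b /ₒ (1 : (⊤ : Submonoid PB)) := by
    rw [OreLocalization.numeratorHom_apply, OreLocalization.numeratorHom_apply] at h0
    exact h0
  rw [OreLocalization.oreDiv_eq_iff] at h'
  obtain ⟨u, v, h1, h2⟩ := h'
  simp only [OneMemClass.coe_one, mul_one] at h2
  have h1' : (u : PB) * b = (u : PB) * a := by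
    have := h1
    simp only [Submonoid.smul_def, smul_eq_mul] at this
    rw [h2] at this ⊢
    exact this
  exact (PB.left_cancel h1').symm

end Braid

namespace Braid

lemma common_right_multiple_bdd {m : ℕ} {u v : List ℕ} (hu : ∀ x ∈ u, x < m)
    (hv : ∀ x ∈ v, x < m) :
    ∃ x y, (∀ z ∈ x, z < m) ∧ (∀ z ∈ y, z < m) ∧ (u ++ x) ≋ (v ++ y) := by
  obtain ⟨x, hx⟩ := dvd_dpow u m hu
  obtain ⟨y, hy⟩ := dvd_dpow v m hv
  set K := max u.length v.length with hK
  have e1 : dpow m K = dpow m u.length ++ dpow m (K - u.length) := by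
    rw [← dpow_add]; congr 1; omega
  have e2 : dpow m K = dpow m v.length ++ dpow m (K - v.length) := by
    rw [← dpow_add]; congr 1; omega
  have h1 : (u ++ (x ++ dpow m (K - u.length))) ≋ dpow m K := by
    calc (u ++ (x ++ dpow m (K - u.length))) = (u ++ x) ++ dpow m (K - u.length) := by simp
      _ ≋ dpow m u.length ++ dpow m (K - u.length) := hx.append_right _
      _ = dpow m K := e1.symm
  have h2 : (v ++ (y ++ dpow m (K - v.length))) ≋ dpow m K := by
    calc (v ++ (y ++ dpow m (K - v.length))) = (v ++ y) ++ dpow m (K - v.length) := by simp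
      _ ≋ dpow m v.length ++ dpow m (K - v.length) := hy.append_right _
      _ = dpow m K := e2.symm
  refine ⟨x ++ dpow m (K - u.length), y ++ dpow m (K - v.length), ?_, ?_, h1.trans h2.symm⟩
  · intro z hz
    have : z ∈ u ++ (x ++ dpow m (K - u.length)) := by simp [hz]
    exact dpow_mem m K z (h1.symm.mem z this)
  · intro z hz
    have : z ∈ v ++ (y ++ dpow m (K - v.length)) := by simp [hz]
    exact dpow_mem m K z (h2.symm.mem z this)

lemma common_left_multiple_bdd {m : ℕ} {u v : List ℕ} (hu : ∀ x ∈ u, x < m)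
    (hv : ∀ x ∈ v, x < m) :
    ∃ x y, (∀ z ∈ x, z < m) ∧ (∀ z ∈ y, z < m) ∧ (x ++ u) ≋ (y ++ v) := by
  obtain ⟨x, y, hx, hy, h⟩ := common_right_multiple_bdd
    (by simpa using hu : ∀ z ∈ u.reverse, z < m) (by simpa using hv : ∀ z ∈ v.reverse, z < m)
  refine ⟨x.reverse, y.reverse, by simpa using hx, by simpa using hy, ?_⟩
  have := h.reverse
  simpa [List.reverse_append] using this

/-- least upper bound (right lcm) for a finite collection of bounded words. -/
lemma word_lub {m : ℕ} : ∀ (qs : List (List ℕ)), (∀ q ∈ qs, ∀ x ∈ q, x < m) →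
    ∃ L, (∀ x ∈ L, x < m) ∧
      (∀ q ∈ qs, ∃ c, (∀ x ∈ c, x < m) ∧ (q ++ c) ≋ L) ∧
      (∀ h, (∀ q ∈ qs, ∃ c, (q ++ c) ≋ h) → ∃ d, (L ++ d) ≋ h) := by
  intro qs
  induction qs with
  | nil =>
      intro _
      exact ⟨[], by simp, by simp, fun h _ => ⟨h, by simpa using beq.rfl⟩⟩
  | cons q qs ih =>
      intro hbdd
      obtain ⟨L', hL'bdd, hub, huniv⟩ := ih (fun q hq => hbdd q (by simp [hq]))
      have hqbdd : ∀ x ∈ q, x < m := hbdd q (by simp)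
      obtain ⟨x, y, hxb, hyb, hxy⟩ := common_right_multiple_bdd hqbdd hL'bdd
      obtain ⟨cu, cv, hlcm, hulcm⟩ := lcm_spec q L' x y hxy
      obtain ⟨t, hth, htt⟩ := hulcm x y hxy
      have hcub : ∀ z ∈ cu, z < m := by
        intro z hz; exact hxb z (hth.mem z (by simp [hz]))
      have hcvb : ∀ z ∈ cv, z < m := by
        intro z hz; exact hyb z (htt.mem z (by simp [hz]))
      refine ⟨q ++ cu, ?_, ?_, ?_⟩
      · intro z hz; simp at hz; rcases hz with hz | hz
        · exact hqbdd z hz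
        · exact hcub z hz
      · intro q' hq'
        rcases List.mem_cons.mp hq' with rfl | hq'
        · exact ⟨cu, hcub, beq.rfl⟩
        · obtain ⟨c', hc'b, hc'⟩ := hub q' hq'
          refine ⟨c' ++ cv, ?_, ?_⟩
          · intro z hz; simp at hz; rcases hz with hz | hz
            · exact hc'b z hz
            · exact hcvb z hz
          · calc (q' ++ (c' ++ cv)) = (q' ++ c') ++ cv := by simp
              _ ≋ L' ++ cv := hc'.append_right cv
              _ ≋ q ++ cu := hlcm.symm
      · intro h hh
        obtain ⟨d₀, hd₀⟩ := hh q (by simp)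
        obtain ⟨dL, hdL⟩ := huniv h (fun q' hq' => hh q' (by simp [hq']))
        have hcm : (q ++ d₀) ≋ (L' ++ dL) := hd₀.trans hdL.symm
        obtain ⟨t', ht1, _⟩ := hulcm d₀ dL hcm
        refine ⟨t', ?_⟩
        calc ((q ++ cu) ++ t') = q ++ (cu ++ t') := by simp
          _ ≋ q ++ d₀ := ht1.symm.append_left q
          _ ≋ h := hd₀

end Braid

/-- The braid relations on the generators `σ₁, …, σ_{n-1}` (indexed by `Fin (n-1)`):
`σᵢσⱼ = σⱼσᵢ` for `|i − j| ≥ 2`, and `σᵢσ_{i+1}σᵢ = σ_{i+1}σᵢσ_{i+1}`. -/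
def braidRels (n : ℕ) : Set (FreeGroup (Fin (n - 1))) :=
  {r | (∃ i j : Fin (n - 1), (i : ℕ) + 2 ≤ (j : ℕ) ∧
          r = FreeGroup.of i * FreeGroup.of j * (FreeGroup.of i)⁻¹ * (FreeGroup.of j)⁻¹) ∨
       (∃ i j : Fin (n - 1), (j : ℕ) = (i : ℕ) + 1 ∧
          r = FreeGroup.of i * FreeGroup.of j * FreeGroup.of i *
              (FreeGroup.of j * FreeGroup.of i * FreeGroup.of j)⁻¹)}

/-- The Artin braid group `Bₙ` on `n` strands, presented with generators
`σ₁, …, σ_{n-1}` and the braid relations. -/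
abbrev BraidGroup (n : ℕ) := PresentedGroup (braidRels n)

namespace Braid

variable {n : ℕ}

/-- letter to generator (out-of-range letters map to 1) -/
noncomputable def gen (n : ℕ) (x : ℕ) : BraidGroup n :=
  if h : x < n - 1 then PresentedGroup.of (⟨x, h⟩ : Fin (n - 1)) else 1

/-- evaluation of a positive word in the braid group -/
noncomputable def ψ (n : ℕ) (w : List ℕ) : BraidGroup n := (w.map (gen n)).prod

lemma ψ_nil : ψ n [] = 1 := rfl

lemma ψ_append (u v : List ℕ) : ψ n (u ++ v) = ψ n u * ψ n v := by
  simp [ψ]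

lemma ψ_cons (a : ℕ) (u : List ℕ) : ψ n (a :: u) = gen n a * ψ n u := by
  simp [ψ]

lemma rel_of_mem {r : FreeGroup (Fin (n-1))} (h : r ∈ braidRels n) :
    (QuotientGroup.mk r : BraidGroup n) = 1 := by
  rw [QuotientGroup.eq_one_iff]
  exact Subgroup.subset_normalClosure h

lemma of_eq_mk (i : Fin (n-1)) :
    (PresentedGroup.of i : BraidGroup n) = QuotientGroup.mk (FreeGroup.of i) := rfl

lemma gen_comm {i j : Fin (n-1)} (h : (i : ℕ) + 2 ≤ (j : ℕ)) :
    (PresentedGroup.of i : BraidGroup n) * PresentedGroup.of j =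
      PresentedGroup.of j * PresentedGroup.of i := by
  have hr : (FreeGroup.of i * FreeGroup.of j * (FreeGroup.of i)⁻¹ * (FreeGroup.of j)⁻¹) ∈
      braidRels n := Or.inl ⟨i, j, h, rfl⟩
  have h1 := rel_of_mem hr
  have h4 : (PresentedGroup.of i : BraidGroup n) * PresentedGroup.of j *
      (PresentedGroup.of i)⁻¹ * (PresentedGroup.of j)⁻¹ = 1 := by
    simp only [of_eq_mk, ← QuotientGroup.mk_inv, ← QuotientGroup.mk_mul]
    exact h1
  have h5 := mul_inv_eq_one.mp h4
  rwa [mul_inv_eq_iff_eq_mul] at h5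

lemma gen_braid {i j : Fin (n-1)} (h : (j : ℕ) = (i : ℕ) + 1) :
    (PresentedGroup.of i : BraidGroup n) * PresentedGroup.of j * PresentedGroup.of i =
      PresentedGroup.of j * PresentedGroup.of i * PresentedGroup.of j := by
  have hr : (FreeGroup.of i * FreeGroup.of j * FreeGroup.of i *
      (FreeGroup.of j * FreeGroup.of i * FreeGroup.of j)⁻¹) ∈ braidRels n :=
    Or.inr ⟨i, j, h, rfl⟩
  have h1 := rel_of_mem hr
  have h4 : (PresentedGroup.of i : BraidGroup n) * PresentedGroup.of j * PresentedGroup.of i *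
      ((PresentedGroup.of j : BraidGroup n) * PresentedGroup.of i * PresentedGroup.of j)⁻¹ = 1 := by
    simp only [of_eq_mk, ← QuotientGroup.mk_inv, ← QuotientGroup.mk_mul]
    exact h1
  exact mul_inv_eq_one.mp h4

lemma gen_comm' {x y : ℕ} (hx : x < n - 1) (hy : y < n - 1) (h : Dist2 x y) :
    gen n x * gen n y = gen n y * gen n x := by
  simp only [gen, dif_pos hx, dif_pos hy]
  rcases h with h | h
  · exact gen_comm h
  · exact (gen_comm h).symm

lemma gen_braid' {x y : ℕ} (hx : x < n - 1) (hy : y < n - 1) (h : Adj x y) :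
    gen n x * gen n y * gen n x = gen n y * gen n x * gen n y := by
  simp only [gen, dif_pos hx, dif_pos hy]
  rcases h with h | h
  · exact gen_braid h
  · exact (gen_braid h).symm

lemma ψ_step {w w' : List ℕ} (hb : ∀ x ∈ w, x < n - 1) (h : Step w w') :
    ψ n w = ψ n w' := by
  rcases step_cases h with ⟨u, v, i, j, hd, rfl, rfl⟩ | ⟨u, v, i, j, hd, rfl, rfl⟩
  · have hi : i < n - 1 := hb i (by simp)
    have hj : j < n - 1 := hb j (by simp)
    simp only [ψ_append, ψ_cons, ← mul_assoc]
    have h1 : ψ n u * gen n i * gen n j * ψ n v = ψ n u * (gen n i * gen n j) * ψ n v := by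
      simp [mul_assoc]
    have h2 : ψ n u * gen n j * gen n i * ψ n v = ψ n u * (gen n j * gen n i) * ψ n v := by
      simp [mul_assoc]
    rw [h1, h2, gen_comm' hi hj hd]
  · have hi : i < n - 1 := hb i (by simp)
    have hj : j < n - 1 := hb j (by simp)
    simp only [ψ_append, ψ_cons, ← mul_assoc]
    have h1 : ψ n u * gen n i * gen n j * gen n i * ψ n v =
        ψ n u * (gen n i * gen n j * gen n i) * ψ n v := by simp [mul_assoc]
    have h2 : ψ n u * gen n j * gen n i * gen n j * ψ n v =
        ψ n u * (gen n j * gen n i * gen n j) * ψ n v := by simp [mul_assoc]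
    rw [h1, h2, gen_braid' hi hj hd]

lemma ψ_beq {w w' : List ℕ} (hb : ∀ x ∈ w, x < n - 1) (h : w ≋ w') :
    ψ n w = ψ n w' := by
  induction h with
  | refl => rfl
  | @tail b c hchain hstep ih =>
      have hbb : ∀ x ∈ b, x < n - 1 := fun x hx => hb x (beq.mem hchain x hx)
      exact ih.trans (ψ_step hbb hstep)

end Braid

namespace Braid

noncomputable def fU (n : ℕ) (i : Fin (n - 1)) : (FracPB)ˣ :=
  (OreLocalization.numerator_isUnit (⟨mk [(i : ℕ)], trivial⟩ : (⊤ : Submonoid PB))).unit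

lemma fU_val (i : Fin (n - 1)) : ((fU n i : (FracPB)ˣ) : FracPB) = ι (mk [(i : ℕ)]) :=
  IsUnit.unit_spec _

lemma braid_rels_hold : ∀ r ∈ braidRels n, FreeGroup.lift (fU n) r = 1 := by
  intro r hr
  rcases hr with ⟨i, j, hij, rfl⟩ | ⟨i, j, hij, rfl⟩
  · simp only [map_mul, map_inv, FreeGroup.lift_apply_of]
    have hcomm : fU n i * fU n j = fU n j * fU n i := by
      apply Units.ext
      simp only [Units.val_mul, fU_val]
      rw [← map_mul, ← map_mul, mk_mul, mk_mul]
      congr 1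
      apply Quotient.sound
      show ([(i : ℕ)] ++ [(j : ℕ)]) ≋ ([(j : ℕ)] ++ [(i : ℕ)])
      exact (Step.comm [] [] (Or.inl hij)).beq
    rw [hcomm]
    group
  · simp only [map_mul, map_inv, FreeGroup.lift_apply_of]
    have hbr : fU n i * fU n j * fU n i = fU n j * fU n i * fU n j := by
      apply Units.ext
      simp only [Units.val_mul, fU_val]
      rw [← map_mul, ← map_mul, ← map_mul, ← map_mul, mk_mul, mk_mul, mk_mul, mk_mul]
      congr 1
      apply Quotient.sound
      show (([(i : ℕ)] ++ [(j : ℕ)]) ++ [(i : ℕ)]) ≋ (([(j : ℕ)] ++ [(i : ℕ)]) ++ [(j : ℕ)])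
      exact (Step.braid [] [] (Or.inl hij)).beq
    rw [hbr]
    group

noncomputable def χ (n : ℕ) : BraidGroup n →* (FracPB)ˣ :=
  PresentedGroup.toGroup (braid_rels_hold (n := n))

lemma χ_gen {x : ℕ} (h : x < n - 1) : χ n (gen n x) = fU n ⟨x, h⟩ := by
  rw [gen, dif_pos h]
  exact PresentedGroup.toGroup.of _

lemma χ_ψ (w : List ℕ) (hb : ∀ x ∈ w, x < n - 1) :
    ((χ n (ψ n w) : (FracPB)ˣ) : FracPB) = ι (mk w) := by
  induction w with
  | nil =>
      show ((χ n 1 : (FracPB)ˣ) : FracPB) = ι (mk [])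
      rw [map_one]
      have : (mk [] : PB) = 1 := rfl
      rw [this, map_one]
      rfl
  | cons a w ih =>
      have ha : a < n - 1 := hb a (by simp)
      rw [ψ_cons, map_mul, Units.val_mul, χ_gen ha, ih (fun x hx => hb x (by simp [hx])), fU_val]
      rw [← map_mul, mk_mul]
      rfl

lemma ψ_inj {u v : List ℕ} (hu : ∀ x ∈ u, x < n - 1) (hv : ∀ x ∈ v, x < n - 1)
    (h : ψ n u = ψ n v) : u ≋ v := by
  have h2 : ι (mk u) = ι (mk v) := by
    rw [← χ_ψ u hu, ← χ_ψ v hv, h]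
  exact Quotient.exact (ι_injective h2)

/-- divisibility in the braid group by a positive element -/
def DvdG (n : ℕ) (g h : BraidGroup n) : Prop :=
  ∃ w, (∀ x ∈ w, x < n - 1) ∧ g * ψ n w = h

lemma DvdG.mul_left {g h : BraidGroup n} (c : BraidGroup n) (hd : DvdG n g h) :
    DvdG n (c * g) (c * h) := by
  obtain ⟨w, hw, he⟩ := hd
  exact ⟨w, hw, by rw [mul_assoc, he]⟩

lemma DvdG.antisymm {g h : BraidGroup n} (h1 : DvdG n g h) (h2 : DvdG n h g) : g = h := by
  obtain ⟨u, hu, he1⟩ := h1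
  obtain ⟨v, hv, he2⟩ := h2
  have h3 : g * (ψ n u * ψ n v) = g * 1 := by
    rw [← mul_assoc, he1, he2, mul_one]
  have h4 : ψ n (u ++ v) = ψ n [] := by
    rw [ψ_append, ψ_nil]
    exact mul_left_cancel h3
  have h5 : (u ++ v) ≋ [] := ψ_inj (by intro x hx; simp at hx
                                       rcases hx with hx | hx
                                       exacts [hu x hx, hv x hx]) (by simp) h4
  have h6 := h5.length
  simp at h6
  have hu0 : u = [] := h6.1
  rw [← he1, hu0, ψ_nil, mul_one]

lemma frac_form (g : BraidGroup n) :
    ∃ u v, (∀ x ∈ u, x < n - 1) ∧ (∀ x ∈ v, x < n - 1) ∧ g = (ψ n u)⁻¹ * ψ n v := by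
  have P1 : ∃ u v, (∀ x ∈ u, x < n - 1) ∧ (∀ x ∈ v, x < n - 1) ∧
      (1 : BraidGroup n) = (ψ n u)⁻¹ * ψ n v := ⟨[], [], by simp, by simp, by simp [ψ_nil]⟩
  have Pinv : ∀ g : BraidGroup n, (∃ u v, (∀ x ∈ u, x < n - 1) ∧ (∀ x ∈ v, x < n - 1) ∧
      g = (ψ n u)⁻¹ * ψ n v) → ∃ u v, (∀ x ∈ u, x < n - 1) ∧ (∀ x ∈ v, x < n - 1) ∧
      g⁻¹ = (ψ n u)⁻¹ * ψ n v := by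
    rintro g ⟨u, v, hu, hv, rfl⟩
    exact ⟨v, u, hv, hu, by group⟩
  have Pmul : ∀ g h : BraidGroup n, (∃ u v, (∀ x ∈ u, x < n - 1) ∧ (∀ x ∈ v, x < n - 1) ∧
      g = (ψ n u)⁻¹ * ψ n v) → (∃ u v, (∀ x ∈ u, x < n - 1) ∧ (∀ x ∈ v, x < n - 1) ∧
      h = (ψ n u)⁻¹ * ψ n v) → ∃ u v, (∀ x ∈ u, x < n - 1) ∧ (∀ x ∈ v, x < n - 1) ∧
      g * h = (ψ n u)⁻¹ * ψ n v := by
    rintro g h ⟨p, q, hp, hq, rfl⟩ ⟨r, s, hr, hs, rfl⟩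
    obtain ⟨x, y, hx, hy, hxy⟩ := common_left_multiple_bdd hq hr
    have he : ψ n (x ++ q) = ψ n (y ++ r) := by
      apply ψ_beq _ hxy
      intro z hz; simp at hz; rcases hz with hz | hz
      exacts [hx z hz, hq z hz]
    refine ⟨x ++ p, y ++ s, ?_, ?_, ?_⟩
    · intro z hz; simp at hz; rcases hz with hz | hz
      exacts [hx z hz, hp z hz]
    · intro z hz; simp at hz; rcases hz with hz | hz
      exacts [hy z hz, hs z hz]
    · rw [ψ_append, ψ_append]
      rw [ψ_append, ψ_append] at he
      calc (ψ n p)⁻¹ * ψ n q * ((ψ n r)⁻¹ * ψ n s)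
          = (ψ n p)⁻¹ * (ψ n x)⁻¹ * (ψ n x * ψ n q) * (ψ n r)⁻¹ * ψ n s := by group
        _ = (ψ n p)⁻¹ * (ψ n x)⁻¹ * (ψ n y * ψ n r) * (ψ n r)⁻¹ * ψ n s := by rw [he]
        _ = (ψ n x * ψ n p)⁻¹ * (ψ n y * ψ n s) := by group
  -- now use induction over the presented group
  obtain ⟨z, rfl⟩ := QuotientGroup.mk_surjective g
  induction z using FreeGroup.induction_on with
  | C1 => exact P1
  | of x =>
      refine ⟨[], [(x : ℕ)], by simp, ?_, ?_⟩
      · intro z hz; simp at hz; subst hz; exact x.isLt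
      · have : ψ n [(x : ℕ)] = PresentedGroup.of x := by
          rw [ψ_cons, ψ_nil, mul_one, gen, dif_pos x.isLt]
        rw [this, ψ_nil, inv_one, one_mul]
        rfl
  | inv_of x ih =>
      have := Pinv _ ih
      exact this
  | mul x y ihx ihy =>
      have := Pmul _ _ ihx ihy
      exact this

lemma exists_lub (T : List (BraidGroup n)) (hne : T ≠ []) :
    ∃ ℓ, (∀ g ∈ T, DvdG n g ℓ) ∧ (∀ h, (∀ g ∈ T, DvdG n g h) → DvdG n ℓ h) := by
  -- Step A: common left denominator
  have stepA : ∀ (T : List (BraidGroup n)), ∃ (p : List ℕ) (qs : List (List ℕ)),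
      (∀ x ∈ p, x < n - 1) ∧ (∀ q ∈ qs, ∀ x ∈ q, x < n - 1) ∧
      T = qs.map (fun q => (ψ n p)⁻¹ * ψ n q) := by
    intro T
    induction T with
    | nil => exact ⟨[], [], by simp, by simp, by simp⟩
    | cons g T ih =>
        obtain ⟨p, qs, hp, hqs, rfl⟩ := ih
        obtain ⟨a, b, ha, hb, hg⟩ := frac_form g
        obtain ⟨x, y, hx, hy, hxy⟩ := common_left_multiple_bdd ha hp
        have he : ψ n (x ++ a) = ψ n (y ++ p) := by
          apply ψ_beq _ hxy
          intro z hz; simp at hz; rcases hz with hz | hz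
          exacts [hx z hz, ha z hz]
        refine ⟨x ++ a, (x ++ b) :: qs.map (fun q => y ++ q), ?_, ?_, ?_⟩
        · intro z hz; simp at hz; rcases hz with hz | hz
          exacts [hx z hz, ha z hz]
        · intro q hq
          simp at hq
          rcases hq with rfl | ⟨q', hq', rfl⟩
          · intro z hz; simp at hz; rcases hz with hz | hz
            exacts [hx z hz, hb z hz]
          · intro z hz; simp at hz; rcases hz with hz | hz
            exacts [hy z hz, hqs q' hq' z hz]
        · simp only [List.map_cons, List.map_map]
          congr 1
          · rw [hg, ψ_append, ψ_append]
            group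
          · apply List.map_congr_left
            intro q hq
            simp only [Function.comp_apply]
            rw [ψ_append]
            have he' : ψ n (x ++ a) = ψ n y * ψ n p := by rw [he, ψ_append]
            rw [ψ_append] at he'
            calc (ψ n p)⁻¹ * ψ n q = (ψ n y * ψ n p)⁻¹ * (ψ n y * ψ n q) := by group
              _ = (ψ n (x ++ a))⁻¹ * ψ n (y ++ q) := by rw [ψ_append, ψ_append, he']
              _ = (ψ n x * ψ n a)⁻¹ * ψ n (y ++ q) := by rw [ψ_append]
  obtain ⟨p, qs, hp, hqs, hT⟩ := stepA T
  obtain ⟨L, hLb, hub, huniv⟩ := word_lub qs hqs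
  refine ⟨(ψ n p)⁻¹ * ψ n L, ?_, ?_⟩
  · intro g hg
    rw [hT] at hg
    simp at hg
    obtain ⟨q, hq, rfl⟩ := hg
    obtain ⟨c, hcb, hc⟩ := hub q hq
    refine ⟨c, hcb, ?_⟩
    have : ψ n (q ++ c) = ψ n L := ψ_beq (by
      intro z hz; simp at hz; rcases hz with hz | hz
      exacts [hqs q hq z hz, hcb z hz]) hc
    rw [ψ_append] at this
    rw [mul_assoc, this]
  · intro h hh
    have hqs_ne : qs ≠ [] := by
      intro h0
      rw [hT, h0] at hne
      simp at hne
    obtain ⟨q₀, hq₀⟩ := List.exists_mem_of_ne_nil qs hqs_ne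
    have hq₀T : ((ψ n p)⁻¹ * ψ n q₀) ∈ T := by
      rw [hT]; exact List.mem_map_of_mem hq₀
    obtain ⟨w₀, hw₀b, hw₀⟩ := hh _ hq₀T
    set h' := q₀ ++ w₀ with hh'
    have hh'b : ∀ x ∈ h', x < n - 1 := by
      intro z hz; rw [hh'] at hz; simp at hz; rcases hz with hz | hz
      exacts [hqs q₀ hq₀ z hz, hw₀b z hz]
    have hform : h = (ψ n p)⁻¹ * ψ n h' := by
      rw [hh', ψ_append, ← hw₀, mul_assoc]
    have hdiv : ∀ q ∈ qs, ∃ c, (q ++ c) ≋ h' := by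
      intro q hq
      have hqT : ((ψ n p)⁻¹ * ψ n q) ∈ T := by
        rw [hT]; exact List.mem_map_of_mem hq
      obtain ⟨wq, hwqb, hwq⟩ := hh _ hqT
      refine ⟨wq, ?_⟩
      apply ψ_inj (by
        intro z hz; simp at hz; rcases hz with hz | hz
        exacts [hqs q hq z hz, hwqb z hz]) hh'b
      rw [ψ_append]
      have : ψ n q * ψ n wq = ψ n p * h := by
        rw [← hwq]; group
      rw [this, hform]; group
    obtain ⟨d, hd⟩ := huniv h' hdiv
    have hdb : ∀ x ∈ d, x < n - 1 := by
      intro z hz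
      exact hh'b z (hd.symm.mem z (by simp [hz]))
    refine ⟨d, hdb, ?_⟩
    have : ψ n (L ++ d) = ψ n h' := ψ_beq (by
      intro z hz; simp at hz; rcases hz with hz | hz
      exacts [hLb z hz, hdb z hz]) hd
    rw [ψ_append] at this
    rw [mul_assoc, this, hform]

end Braid

/-- The braid group `Bₙ` is torsion-free: if `B ∈ Bₙ` satisfies
`B^k = 1` for some integer `k ≥ 1`, then `B = 1`. -/
theorem stmt6 (n : ℕ) (B : BraidGroup n) (k : ℕ) (hk : 1 ≤ k) (h : B ^ k = 1) :
    B = 1 := by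
  classical
  set T : List (BraidGroup n) := (List.range k).map (fun i => B ^ i) with hT
  have hne : T ≠ [] := by
    rw [hT]
    simp only [ne_eq, List.map_eq_nil_iff, List.range_eq_nil]
    omega
  have hmemT : ∀ g, g ∈ T ↔ ∃ i, i < k ∧ B ^ i = g := by
    intro g
    rw [hT]
    simp [List.mem_map, List.mem_range]
  have hBmul : ∀ g ∈ T, B * g ∈ T := by
    intro g hg
    obtain ⟨i, hi, rfl⟩ := (hmemT g).mp hg
    rw [← pow_succ']
    by_cases hik : i + 1 < k
    · exact (hmemT _).mpr ⟨i + 1, hik, rfl⟩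
    · have hik' : i + 1 = k := by omega
      rw [hik', h]
      exact (hmemT _).mpr ⟨0, by omega, by simp⟩
  have hBinvmul : ∀ g ∈ T, B⁻¹ * g ∈ T := by
    intro g hg
    obtain ⟨i, hi, rfl⟩ := (hmemT g).mp hg
    by_cases hi0 : 1 ≤ i
    · have he : B ^ i = B * B ^ (i - 1) := by
        rw [← pow_succ']
        congr 1
        omega
      have : B⁻¹ * B ^ i = B ^ (i - 1) := by rw [he]; group
      rw [this]
      exact (hmemT _).mpr ⟨i - 1, by omega, rfl⟩
    · have hi0' : i = 0 := by omega
      subst hi0'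
      have he : B * B ^ (k - 1) = 1 := by
        rw [← pow_succ']
        have : k - 1 + 1 = k := by omega
        rw [this, h]
      have hBinv : B⁻¹ = B ^ (k - 1) := inv_eq_of_mul_eq_one_right he
      rw [pow_zero, mul_one, hBinv]
      exact (hmemT _).mpr ⟨k - 1, by omega, rfl⟩
  obtain ⟨ℓ, hub, hleast⟩ := Braid.exists_lub T hne
  have h1 : Braid.DvdG n ℓ (B * ℓ) := by
    apply hleast
    intro g hg
    have hmem := hBinvmul g hg
    have hd := hub _ hmem
    have hd2 := Braid.DvdG.mul_left B hd
    have : B * (B⁻¹ * g) = g := by group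
    rwa [this] at hd2
  have h2 : Braid.DvdG n (B * ℓ) ℓ := by
    have hub' : ∀ g ∈ T, Braid.DvdG n g (B⁻¹ * ℓ) := by
      intro g hg
      have hd := hub _ (hBmul g hg)
      have hd2 := Braid.DvdG.mul_left B⁻¹ hd
      have : B⁻¹ * (B * g) = g := by group
      rwa [this] at hd2
    have hd := hleast _ hub'
    have hd2 := Braid.DvdG.mul_left B hd
    have : B * (B⁻¹ * ℓ) = ℓ := by group
    rwa [this] at hd2
  have h3 : B * ℓ = ℓ := Braid.DvdG.antisymm h2 h1
  exact mul_eq_right.mp h3
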